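/- Let f(λ) = -P0 log(1 + λ((p/p*) - 1)) for λ ∈ [0,1], where p, p* are probability densities and P0 a probability measure with P0(p* > 0) = 1. Then the right derivative of f at 0 exists and equals f'(0+) = 1 - P0(p/p*). -/

import Mathlib

open MeasureTheory Real

-- key pointwise bound
lemma key_bound {y lam : ℝ} (hy : -1 ≤ y) (h1 : 0 < lam) (h2 : lam ≤ 1/2) :
    |Real.log (1 + lam * y) / lam| ≤ |Real.log (1 + y)| + |y| + 2 := by
  rcases eq_or_lt_of_le hy with h | h
  · -- y = -1
    have hy' : y = -1 := h.symm
    subst hy'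
    have h1l : (0:ℝ) < 1 - lam := by linarith
    have hub : Real.log ((1-lam)⁻¹) ≤ (1-lam)⁻¹ - 1 :=
      Real.log_le_sub_one_of_pos (by positivity)
    have hinv : (1-lam)⁻¹ - 1 = lam / (1-lam) := by field_simp; ring
    have hd : lam / (1-lam) ≤ 2 * lam := by
      rw [div_le_iff₀ h1l]; nlinarith
    have hlog : -Real.log (1 - lam) ≤ 2 * lam := by
      rw [← Real.log_inv]; linarith [hub, hinv ▸ hub]
    have hnp : Real.log (1 - lam) ≤ 0 := Real.log_nonpos (by linarith) (by linarith)
    have : |Real.log (1 + lam * (-1)) / lam| ≤ 2 := by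
      have : (1 : ℝ) + lam * (-1) = 1 - lam := by ring
      rw [this, abs_div, abs_of_pos h1, abs_of_nonpos hnp, div_le_iff₀ h1]
      linarith
    have h0 : Real.log (1 + (-1)) = 0 := by norm_num
    rw [h0]
    simp only [abs_zero, abs_neg, abs_one]
    linarith
  · -- -1 < y
    have h1y : (0:ℝ) < 1 + y := by linarith
    have hpos : (0:ℝ) < 1 + lam * y := by nlinarith
    have hub : Real.log (1 + lam * y) / lam ≤ y := by
      rw [div_le_iff₀ h1]
      have := Real.log_le_sub_one_of_pos hpos
      linarith
    have hlb : Real.log (1 + y) ≤ Real.log (1 + lam * y) / lam := by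
      rw [le_div_iff₀ h1]
      have hc := strictConcaveOn_log_Ioi.concaveOn.2 (Set.mem_Ioi.2 h1y)
        (Set.mem_Ioi.2 one_pos) (le_of_lt h1) (by linarith : (0:ℝ) ≤ 1 - lam) (by ring)
      simp only [smul_eq_mul, Real.log_one, mul_zero, add_zero] at hc
      have he : lam * (1 + y) + (1 - lam) * 1 = 1 + lam * y := by ring
      rw [he] at hc
      linarith
    rw [abs_le]
    constructor
    · have := neg_abs_le (Real.log (1 + y))
      have := abs_nonneg y
      linarith
    · have := le_abs_self y
      have := abs_nonneg (Real.log (1 + y))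
      linarith

-- pointwise limit
lemma key_lim (y : ℝ) :
    Filter.Tendsto (fun lam => Real.log (1 + lam * y) / lam) (nhdsWithin 0 (Set.Ioi 0))
      (nhds y) := by
  have hg : HasDerivAt (fun t : ℝ => 1 + t * y) y 0 := by
    simpa using ((hasDerivAt_id (0:ℝ)).mul_const y).const_add 1
  have hl : HasDerivAt Real.log ((1:ℝ))⁻¹ (1 + (0:ℝ) * y) := by
    simpa using Real.hasDerivAt_log (by norm_num : (1 : ℝ) + 0 * y ≠ 0)
  have h : HasDerivAt (fun t : ℝ => Real.log (1 + t * y)) y 0 := by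
    simpa [Function.comp_def] using hl.comp 0 hg
  have := hasDerivAt_iff_tendsto_slope.mp h
  have h2 := this.mono_left (nhdsWithin_mono 0 (by
    intro x hx
    simp only [Set.mem_compl_iff, Set.mem_singleton_iff]
    exact ne_of_gt hx))
  refine h2.congr' ?_
  filter_upwards [self_mem_nhdsWithin] with lam hlam
  simp [slope_def_field, (Set.mem_Ioi.mp hlam).ne']


/-- For `f(λ) = -P0 log(1 + λ((p/p*) - 1))` on `[0,1]`, with `p, p*` probability
densities and `p* > 0` `P0`-a.s., the right derivative of `f` at `0` exists and equals
`1 - P0(p/p*)`. -/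
theorem stmt4 {X : Type*} [MeasurableSpace X] (P0 : Measure X) [IsProbabilityMeasure P0]
    {μ : Measure X} [SigmaFinite μ]
    (p pstar : X → ℝ) (hpm : Measurable p) (hpsm : Measurable pstar)
    (hp : ∀ x, 0 ≤ p x) (hps : ∀ x, 0 ≤ pstar x)
    (hp1 : ∫ x, p x ∂μ = 1) (hps1 : ∫ x, pstar x ∂μ = 1)
    (hpos : ∀ᵐ x ∂P0, 0 < pstar x)
    (hratio : Integrable (fun x => p x / pstar x) P0)
    (hfinite : ∀ lam ∈ Set.Icc (0 : ℝ) 1,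
      Integrable (fun x => Real.log (1 + lam * (p x / pstar x - 1))) P0) :
    HasDerivWithinAt
      (fun lam : ℝ => -∫ x, Real.log (1 + lam * (p x / pstar x - 1)) ∂P0)
      (1 - ∫ x, p x / pstar x ∂P0) (Set.Ici 0) 0 := by
  set r : X → ℝ := fun x => p x / pstar x with hr
  -- integrability of log r
  have hlogr : Integrable (fun x => Real.log (r x)) P0 := by
    have := hfinite 1 (by norm_num)
    refine this.congr (Filter.Eventually.of_forall fun x => ?_)
    norm_num
    rfl
  -- the bound
  set bound : X → ℝ := fun x => |Real.log (r x)| + |r x - 1| + 2 with hbdef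
  have hbint : Integrable bound P0 :=
    ((hlogr.abs.add (hratio.sub (integrable_const 1)).abs).add (integrable_const 2))
  -- main tendsto via dominated convergence
  have T : Filter.Tendsto (fun lam => ∫ x, Real.log (1 + lam * (r x - 1)) / lam ∂P0)
      (nhdsWithin 0 (Set.Ioi 0)) (nhds (∫ x, (r x - 1) ∂P0)) := by
    refine tendsto_integral_filter_of_dominated_convergence bound ?_ ?_ hbint ?_
    · refine Filter.Eventually.of_forall fun lam => ?_
      exact (((measurable_const.add (measurable_const.mul
        ((hpm.div hpsm).sub measurable_const))).log).div_const lam).aestronglyMeasurable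
    · have hmem : Set.Ioo (0:ℝ) (1/2) ∈ nhdsWithin (0:ℝ) (Set.Ioi 0) :=
        Ioo_mem_nhdsGT_of_mem (by norm_num)
      filter_upwards [hmem] with lam hlam
      filter_upwards [hpos] with x hx
      have hy : -1 ≤ r x - 1 := by
        have : 0 ≤ r x := div_nonneg (hp x) (hps x)
        linarith
      have hkb := key_bound hy hlam.1 (le_of_lt hlam.2)
      rw [show (1:ℝ) + (r x - 1) = r x by ring] at hkb
      simpa only [Real.norm_eq_abs, hbdef] using hkb
    · exact Filter.Eventually.of_forall fun x => key_lim (r x - 1)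
  -- integral of (r - 1)
  have hint : ∫ x, (r x - 1) ∂P0 = (∫ x, r x ∂P0) - 1 := by
    rw [integral_sub hratio (integrable_const 1)]
    simp
  rw [hasDerivWithinAt_iff_tendsto_slope, Set.Ici_sdiff_left]
  have Tneg := T.neg
  rw [hint] at Tneg
  have heq : (1 : ℝ) - ∫ x, r x ∂P0 = -((∫ x, r x ∂P0) - 1) := by ring
  rw [heq]
  refine Tneg.congr' ?_
  filter_upwards [self_mem_nhdsWithin] with lam hlam
  have hlam0 : lam ≠ 0 := ne_of_gt hlam.out
  simp only [slope_def_field]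
  rw [integral_div]
  have h0 : ∫ x, Real.log (1 + (0:ℝ) * (p x / pstar x - 1)) ∂P0 = 0 := by simp
  rw [h0]
  simp only [hr]
  ring
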